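/- Let p be a design on N ≥ 2 units satisfying positivity and the fixed total weight condition: for every w in the support, Σ_{i : w_i = 1} 1/π_i + Σ_{i : w_i = 0} 1/(1 − π_i) = 2N. Let β ∈ ℝ, suppose the treatment effects are homogeneous (Y_i(1) − Y_i(0) = τ for all i), and let ĉ(v) be the β-imputed vector with coordinates ĉ_i(v) = v_i·(Y_i(1) − π_i·β) + (1 − v_i)·(Y_i(0) + (1 − π_i)·β). Then, with A₁ and A₂ the quantities from the imputation decomposition ψ(ĉ(v)) = Var(τ̂) + A₁(v) + A₂(v), one has E[A₂(W)] = 0, and consequently E[ψ(ĉ(W))] = Var(τ̂) + E[A₁(W)] ≥ Var(τ̂). -/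

import Mathlib

open Finset

noncomputable section

/-- Propensity score `π_i = Pr(W_i = 1)` of a design `p` on `N` units. -/
def piS (N : ℕ) (p : (Fin N → Bool) → ℝ) (i : Fin N) : ℝ :=
  ∑ w : Fin N → Bool, if w i then p w else 0

/-- Expectation under the design. -/
def expct (N : ℕ) (p f : (Fin N → Bool) → ℝ) : ℝ :=
  ∑ w : Fin N → Bool, p w * f w

/-- Average treatment effect. -/
def tauATE (N : ℕ) (Y1 Y0 : Fin N → ℝ) : ℝ :=
  (1 / (N : ℝ)) * ∑ i, (Y1 i - Y0 i)

/-- Horvitz–Thompson estimator. -/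
def tauHT (N : ℕ) (p : (Fin N → Bool) → ℝ) (Y1 Y0 : Fin N → ℝ) (w : Fin N → Bool) : ℝ :=
  (1 / (N : ℝ)) * (∑ i, if w i then Y1 i / piS N p i else 0)
    - (1 / (N : ℝ)) * (∑ i, if w i then 0 else Y0 i / (1 - piS N p i))

/-- Design-based variance of the Horvitz–Thompson estimator. -/
def varHT (N : ℕ) (p : (Fin N → Bool) → ℝ) (Y1 Y0 : Fin N → ℝ) : ℝ :=
  expct N p (fun w => (tauHT N p Y1 Y0 w - tauATE N Y1 Y0) ^ 2)

/-- `ψ(x) = (1/N²)·Σ_w p_w·(Σ_{w_i=1} x_i/π_i − Σ_{w_i=0} x_i/(1 − π_i))²`. -/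
def psiGen (N : ℕ) (p : (Fin N → Bool) → ℝ) (x : Fin N → ℝ) : ℝ :=
  (1 / (N : ℝ) ^ 2) * ∑ w : Fin N → Bool, p w *
    ((∑ i, if w i then x i / piS N p i else 0)
      - ∑ i, if w i then 0 else x i / (1 - piS N p i)) ^ 2

/-- Real indicator of a Boolean. -/
def indR (b : Bool) : ℝ := if b then 1 else 0

/-- The `β`-imputed vector for a general design:
`ĉ_i(v) = v_i·(Y_i(1) − π_i·β) + (1 − v_i)·(Y_i(0) + (1 − π_i)·β)`. -/
def cHatGenBeta (N : ℕ) (p : (Fin N → Bool) → ℝ) (Y1 Y0 : Fin N → ℝ) (β : ℝ)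
    (v : Fin N → Bool) (i : Fin N) : ℝ :=
  if v i then Y1 i - piS N p i * β else Y0 i + (1 - piS N p i) * β

/-- `Σ_{i : w_i = 1} v_i/π_i − Σ_{i : w_i = 0} v_i/(1 − π_i)`. -/
def Sv (N : ℕ) (p : (Fin N → Bool) → ℝ) (v w : Fin N → Bool) : ℝ :=
  (∑ i, if w i then indR (v i) / piS N p i else 0)
    - ∑ i, if w i then 0 else indR (v i) / (1 - piS N p i)

/-- Number of control units `N_c(w)` (as a real number). -/
def NcR (N : ℕ) (w : Fin N → Bool) : ℝ :=
  ∑ i : Fin N, if w i then (0 : ℝ) else 1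

/-- The term `A₁(v)` of the imputation decomposition. -/
def A1 (N : ℕ) (p : (Fin N → Bool) → ℝ) (Y1 Y0 : Fin N → ℝ) (β : ℝ)
    (v : Fin N → Bool) : ℝ :=
  ((tauATE N Y1 Y0 - β) ^ 2 / (N : ℝ) ^ 2) * ∑ w : Fin N → Bool, p w *
    (Sv N p v w - ((∑ i, if w i then 1 / piS N p i else 0) - (N : ℝ))) ^ 2

/-- The term `A₂(v)` of the imputation decomposition. -/
def A2 (N : ℕ) (p : (Fin N → Bool) → ℝ) (Y1 Y0 : Fin N → ℝ) (β : ℝ)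
    (v : Fin N → Bool) : ℝ :=
  (2 * (tauATE N Y1 Y0 - β) / (N : ℝ) ^ 2) * ∑ w : Fin N → Bool, p w *
    (((∑ i, if w i then Y0 i / piS N p i else 0)
        - ∑ i, if w i then 0 else Y0 i / (1 - piS N p i))
      + tauATE N Y1 Y0 *
          ((∑ i, if w i then (1 - piS N p i) / piS N p i else 0) - NcR N w)) *
    (Sv N p v w
      - ((∑ i, if w i then (1 - piS N p i) / piS N p i else 0) - NcR N w))

namespace ImputeAux

def Qw (N : ℕ) (p : (Fin N → Bool) → ℝ) (w : Fin N → Bool) : ℝ :=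
  (∑ i, if w i then (1 - piS N p i) / piS N p i else 0) - NcR N w


lemma Q_eq (N : ℕ) (p : (Fin N → Bool) → ℝ)
    (hpos : ∀ i, 0 < piS N p i ∧ piS N p i < 1) (w : Fin N → Bool) :
    (∑ i, if w i then 1 / piS N p i else 0) - (N : ℝ) = Qw N p w := by
  have hN : (N : ℝ) = ∑ _i : Fin N, (1 : ℝ) := by simp
  rw [Qw, NcR, hN, ← Finset.sum_sub_distrib, ← Finset.sum_sub_distrib]
  refine Finset.sum_congr rfl fun i _ => ?_
  have h0 : piS N p i ≠ 0 := (hpos i).1.ne'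
  by_cases h : w i
  · simp only [h, if_true]
    field_simp
    ring
  · simp [h]

def Sc (N : ℕ) (p : (Fin N → Bool) → ℝ) (Y1 Y0 : Fin N → ℝ) (w : Fin N → Bool) : ℝ :=
  ((∑ i, if w i then Y0 i / piS N p i else 0)
    - ∑ i, if w i then 0 else Y0 i / (1 - piS N p i))
  + tauATE N Y1 Y0 * Qw N p w

lemma ht_eq (N : ℕ) (p : (Fin N → Bool) → ℝ) (Y1 Y0 : Fin N → ℝ)
    (hN : (N : ℝ) ≠ 0)
    (hpos : ∀ i, 0 < piS N p i ∧ piS N p i < 1)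
    (hhom : ∀ i, Y1 i - Y0 i = tauATE N Y1 Y0) (w : Fin N → Bool) :
    tauHT N p Y1 Y0 w - tauATE N Y1 Y0 = (1 / (N : ℝ)) * Sc N p Y1 Y0 w := by
  set τ := tauATE N Y1 Y0 with hτ
  have hτsum : τ = (1 / (N : ℝ)) * ∑ _i : Fin N, τ := by
    rw [Finset.sum_const, Finset.card_univ, Fintype.card_fin, nsmul_eq_mul]
    field_simp
  have key : (∑ i, if w i then Y1 i / piS N p i else 0)
      - (∑ i, if w i then 0 else Y0 i / (1 - piS N p i)) - (∑ _i : Fin N, τ)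
      = Sc N p Y1 Y0 w := by
    simp only [Sc, Qw, NcR, mul_sub, Finset.mul_sum, ← Finset.sum_sub_distrib,
      ← Finset.sum_add_distrib]
    refine Finset.sum_congr rfl fun i _ => ?_
    have h0 : piS N p i ≠ 0 := (hpos i).1.ne'
    have hY : Y1 i = Y0 i + τ := by have := hhom i; linarith
    by_cases h : w i
    · simp only [h, if_true, hY]
      field_simp
      ring
    · simp only [h, if_false]
      simp only [Bool.false_eq_true, if_false, ← hτ]
      simp
      ring
  rw [tauHT, ← key]
  conv_lhs => rw [hτsum]
  ring


lemma chat_eq (N : ℕ) (p : (Fin N → Bool) → ℝ) (Y1 Y0 : Fin N → ℝ) (β : ℝ)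
    (hpos : ∀ i, 0 < piS N p i ∧ piS N p i < 1)
    (hhom : ∀ i, Y1 i - Y0 i = tauATE N Y1 Y0) (v w : Fin N → Bool) :
    ((∑ i, if w i then cHatGenBeta N p Y1 Y0 β v i / piS N p i else 0)
      - ∑ i, if w i then 0 else cHatGenBeta N p Y1 Y0 β v i / (1 - piS N p i))
    = Sc N p Y1 Y0 w + (tauATE N Y1 Y0 - β) * (Sv N p v w - Qw N p w) := by
  set τ := tauATE N Y1 Y0 with hτ
  simp only [Sc, Qw, Sv, NcR, mul_sub, sub_mul, Finset.mul_sum, Finset.sum_mul,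
    ← Finset.sum_sub_distrib, ← Finset.sum_add_distrib]
  refine Finset.sum_congr rfl fun i _ => ?_
  have h0 : piS N p i ≠ 0 := (hpos i).1.ne'
  have h1 : (1 : ℝ) - piS N p i ≠ 0 := by have := (hpos i).2; intro h; linarith
  have hY : Y1 i = Y0 i + τ := by have := hhom i; linarith
  by_cases h : w i <;> by_cases hv : v i <;>
    simp only [h, hv, if_true, if_false, cHatGenBeta, indR, hY, ← hτ,
      Bool.false_eq_true] <;>
    field_simp <;> ring

lemma sv_ex (N : ℕ) (p : (Fin N → Bool) → ℝ)
    (hpos : ∀ i, 0 < piS N p i ∧ piS N p i < 1)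
    (hweight : ∀ w : Fin N → Bool, 0 < p w →
      (∑ i, if w i then 1 / piS N p i else 1 / (1 - piS N p i)) = 2 * (N : ℝ))
    (w : Fin N → Bool) (hw : 0 < p w) :
    ∑ v, p v * Sv N p v w = Qw N p w := by
  have hpi : ∀ i : Fin N, ∑ v : Fin N → Bool, p v * indR (v i) = piS N p i := by
    intro i
    rw [piS]
    refine Finset.sum_congr rfl fun v _ => ?_
    by_cases h : v i <;> simp [h, indR]
  have hA : ∑ v, p v * Sv N p v w
      = ∑ i, ((if w i then (1 : ℝ) else 0)
          - (if w i then 0 else piS N p i / (1 - piS N p i))) := by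
    simp only [Sv, mul_sub, Finset.mul_sum, ← Finset.sum_sub_distrib]
    rw [Finset.sum_comm]
    refine Finset.sum_congr rfl fun i _ => ?_
    have h0 : piS N p i ≠ 0 := (hpos i).1.ne'
    by_cases h : w i
    · simp only [h, if_true]
      have : ∀ v : Fin N → Bool, p v * (indR (v i) / piS N p i) - p v * 0
          = (p v * indR (v i)) * (1 / piS N p i) := fun v => by ring
      simp only [this, ← Finset.sum_mul, hpi]
      field_simp
      norm_num
    · simp only [h, Bool.false_eq_true, if_false]
      have : ∀ v : Fin N → Bool, p v * 0 - p v * (indR (v i) / (1 - piS N p i))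
          = -((p v * indR (v i)) * (1 / (1 - piS N p i))) := fun v => by ring
      simp only [this]
      simp [neg_div]
      rw [← Finset.sum_mul, hpi, div_eq_mul_inv]
  rw [hA, Qw, NcR]
  have h2N := hweight w hw
  have key : ∀ i : Fin N,
      ((if w i then (1 : ℝ) else 0) - (if w i then 0 else piS N p i / (1 - piS N p i)))
        - ((if w i then (1 - piS N p i) / piS N p i else 0) - (if w i then (0:ℝ) else 1))
      = 2 - (if w i then 1 / piS N p i else 1 / (1 - piS N p i)) := by
    intro i
    have h0 : piS N p i ≠ 0 := (hpos i).1.ne'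
    have h1 : (1 : ℝ) - piS N p i ≠ 0 := by have := (hpos i).2; intro h; linarith
    by_cases h : w i <;> simp only [h, if_true, if_false, Bool.false_eq_true] <;> field_simp <;> ring
  have : (∑ i, ((if w i then (1 : ℝ) else 0) - (if w i then 0 else piS N p i / (1 - piS N p i))))
      - ((∑ i, if w i then (1 - piS N p i) / piS N p i else 0) - ∑ i : Fin N, if w i then (0:ℝ) else 1)
      = ∑ i : Fin N, (2 - (if w i then 1 / piS N p i else 1 / (1 - piS N p i))) := by
    simp only [← Finset.sum_sub_distrib]
    exact Finset.sum_congr rfl fun i _ => key i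
  have hz : (∑ i : Fin N, ((2:ℝ) - (if w i then 1 / piS N p i else 1 / (1 - piS N p i)))) = 0 := by
    rw [Finset.sum_sub_distrib, h2N, Finset.sum_const, Finset.card_univ, Fintype.card_fin,
      nsmul_eq_mul]
    ring
  linarith [this, hz]

end ImputeAux

open ImputeAux

/-- Corollary A1: under the fixed total weight condition and homogeneous treatment
effects, `E[A₂(W)] = 0`, hence `E[ψ(ĉ(W))] = Var(τ̂) + E[A₁(W)] ≥ Var(τ̂)`. -/
theorem imputation_conservative_fixed_weight
    (N : ℕ) (hN : 2 ≤ N)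
    (p : (Fin N → Bool) → ℝ) (hp : ∀ w, 0 ≤ p w)
    (hsum : ∑ w : Fin N → Bool, p w = 1)
    (hpos : ∀ i, 0 < piS N p i ∧ piS N p i < 1)
    (hweight : ∀ w : Fin N → Bool, 0 < p w →
      (∑ i, if w i then 1 / piS N p i else 1 / (1 - piS N p i)) = 2 * (N : ℝ))
    (Y1 Y0 : Fin N → ℝ) (β : ℝ)
    (hhom : ∀ i, Y1 i - Y0 i = tauATE N Y1 Y0) :
    expct N p (A2 N p Y1 Y0 β) = 0 ∧
      expct N p (fun v => psiGen N p (cHatGenBeta N p Y1 Y0 β v))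
        = varHT N p Y1 Y0 + expct N p (A1 N p Y1 Y0 β) ∧
      varHT N p Y1 Y0 ≤ expct N p (fun v => psiGen N p (cHatGenBeta N p Y1 Y0 β v)) := by
  have hNne : (N : ℝ) ≠ 0 := Nat.cast_ne_zero.mpr (by omega)
  set τ := tauATE N Y1 Y0 with hτ
  -- A2 rewritten via Sc/Qw (definitional)
  have hA2v : ∀ v, A2 N p Y1 Y0 β v
      = (2 * (τ - β) / (N : ℝ) ^ 2) * ∑ w : Fin N → Bool,
          p w * Sc N p Y1 Y0 w * (Sv N p v w - Qw N p w) := fun v => rfl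
  -- variance via Sc
  have hvar : varHT N p Y1 Y0
      = (1 / (N : ℝ) ^ 2) * ∑ w : Fin N → Bool, p w * (Sc N p Y1 Y0 w) ^ 2 := by
    rw [varHT, expct, Finset.mul_sum]
    refine Finset.sum_congr rfl fun w _ => ?_
    rw [ht_eq N p Y1 Y0 hNne hpos hhom w]
    field_simp
  -- A1 via Qw
  have hA1v : ∀ v, A1 N p Y1 Y0 β v
      = ((τ - β) ^ 2 / (N : ℝ) ^ 2) * ∑ w : Fin N → Bool,
          p w * (Sv N p v w - Qw N p w) ^ 2 := by
    intro v
    rw [A1]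
    simp only [Q_eq N p hpos]
    rfl
  -- pointwise decomposition
  have h0 : ∀ v, psiGen N p (cHatGenBeta N p Y1 Y0 β v)
      = varHT N p Y1 Y0 + A1 N p Y1 Y0 β v + A2 N p Y1 Y0 β v := by
    intro v
    rw [psiGen, hvar, hA1v, hA2v]
    simp only [chat_eq N p Y1 Y0 β hpos hhom v, ← hτ]
    simp only [Finset.mul_sum, ← Finset.sum_add_distrib]
    refine Finset.sum_congr rfl fun w _ => ?_
    ring
  -- inner expectation vanishes
  have inner : ∀ w : Fin N → Bool, p w ≠ 0 →
      ∑ v : Fin N → Bool, p v * (Sv N p v w - Qw N p w) = 0 := by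
    intro w hw
    have hw' : 0 < p w := lt_of_le_of_ne (hp w) (Ne.symm hw)
    simp only [mul_sub]
    rw [Finset.sum_sub_distrib, sv_ex N p hpos hweight w hw', ← Finset.sum_mul, hsum,
      one_mul, sub_self]
  -- E[A2] = 0
  have hA2zero : expct N p (A2 N p Y1 Y0 β) = 0 := by
    rw [expct]
    simp only [hA2v]
    have swap : ∑ v : Fin N → Bool, p v * ((2 * (τ - β) / (N : ℝ) ^ 2) *
          ∑ w : Fin N → Bool, p w * Sc N p Y1 Y0 w * (Sv N p v w - Qw N p w))
        = ∑ w : Fin N → Bool, (2 * (τ - β) / (N : ℝ) ^ 2) * (p w * Sc N p Y1 Y0 w) *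
            ∑ v : Fin N → Bool, p v * (Sv N p v w - Qw N p w) := by
      simp only [Finset.mul_sum]
      rw [Finset.sum_comm]
      exact Finset.sum_congr rfl fun w _ => Finset.sum_congr rfl fun v _ => by ring
    rw [swap]
    refine Finset.sum_eq_zero fun w _ => ?_
    by_cases hw : p w = 0
    · simp [hw]
    · rw [inner w hw, mul_zero]
  -- E[A1] ≥ 0
  have hA1nonneg : 0 ≤ expct N p (A1 N p Y1 Y0 β) := by
    rw [expct]
    refine Finset.sum_nonneg fun v _ => mul_nonneg (hp v) ?_
    rw [hA1v]
    refine mul_nonneg (by positivity) (Finset.sum_nonneg fun w _ => mul_nonneg (hp w) (sq_nonneg _))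
  -- the decomposition of the expectation
  have hmain : expct N p (fun v => psiGen N p (cHatGenBeta N p Y1 Y0 β v))
      = varHT N p Y1 Y0 + expct N p (A1 N p Y1 Y0 β) := by
    rw [expct]
    simp only [h0, mul_add]
    rw [Finset.sum_add_distrib, Finset.sum_add_distrib, ← Finset.sum_mul, hsum, one_mul]
    rw [show (∑ v : Fin N → Bool, p v * A2 N p Y1 Y0 β v) = expct N p (A2 N p Y1 Y0 β) from rfl,
      hA2zero, add_zero]
    rfl
  exact ⟨hA2zero, hmain, by rw [hmain]; linarith⟩
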